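/- In VP_n (n ≥ 3), each generator λ_{nk} (1 ≤ k ≤ n−1) can be expressed in terms of the cabled elements b_{i,j}: λ_{n1} = b_{1,n-2}^{-1} b_{1,n-1}; λ_{nk} = b_{k,n-k-1}^{-1} b_{k,n-k} b_{k-1,n-k+1}^{-1} b_{k-1,n-k} for 1 < k < n−1; and λ_{n,n-1} = b_{n-1,1} b_{n-2,2}^{-1} b_{n-2,1}. -/
import Mathlib


/-- Index predicate for the generators `λ_{i j}` of the virtual pure braid group
`VP n`: `1 ≤ i, j ≤ n` and `i ≠ j` (1-based indices). -/
def VPIdx (n : ℕ) (p : ℕ × ℕ) : Prop :=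
  1 ≤ p.1 ∧ p.1 ≤ n ∧ 1 ≤ p.2 ∧ p.2 ≤ n ∧ p.1 ≠ p.2

instance (n : ℕ) (p : ℕ × ℕ) : Decidable (VPIdx n p) := by
  unfold VPIdx; infer_instance

/-- Generators `λ_{i j}`, `1 ≤ i ≠ j ≤ n`. -/
def VPGen (n : ℕ) := {p : ℕ × ℕ // VPIdx n p}

/-- The generator `λ_{i j}` as an element of the free group (junk value `1` out of range). -/
def lamW {n : ℕ} (i j : ℕ) : FreeGroup (VPGen n) :=
  if h : VPIdx n (i, j) then FreeGroup.of ⟨(i, j), h⟩ else 1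

/-- The defining relations of the virtual pure braid group `VP n`:
`λ_{ij}λ_{kl} = λ_{kl}λ_{ij}` and `λ_{ki}λ_{kj}λ_{ij} = λ_{ij}λ_{kj}λ_{ki}`
(distinct letters denote distinct indices). -/
def VPRels (n : ℕ) : Set (FreeGroup (VPGen n)) :=
  {w | ∃ i j k l : ℕ, VPIdx n (i, j) ∧ VPIdx n (k, l) ∧ i ≠ k ∧ i ≠ l ∧ j ≠ k ∧ j ≠ l ∧
      w = lamW i j * lamW k l * (lamW k l * lamW i j)⁻¹} ∪
  {w | ∃ i j k : ℕ, VPIdx n (i, j) ∧ VPIdx n (k, i) ∧ VPIdx n (k, j) ∧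
      w = lamW k i * lamW k j * lamW i j * (lamW i j * lamW k j * lamW k i)⁻¹}

/-- The virtual pure braid group on `n` strands. -/
abbrev VP (n : ℕ) := PresentedGroup (VPRels n)

/-- The generator `λ_{i j}` of `VP n` (junk value `1` out of range). -/
def lam' {n : ℕ} (i j : ℕ) : VP n :=
  if h : VPIdx n (i, j) then PresentedGroup.of ⟨(i, j), h⟩ else 1

/-- The product `λ_{1 l} λ_{2 l} ⋯ λ_{k-1, l}`. -/
def conjA {n : ℕ} (k l : ℕ) : VP n :=
  ((List.range (k - 1)).map fun j => lam' (j + 1) l).prod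

/-- The product `λ_{l 1}⁻¹ λ_{l 2}⁻¹ ⋯ λ_{l, k-1}⁻¹`. -/
def conjB {n : ℕ} (k l : ℕ) : VP n :=
  ((List.range (k - 1)).map fun j => (lam' l (j + 1))⁻¹).prod

/-- `s` is the family of degeneracy (strand-doubling) homomorphisms
`s_i : VP m → VP (m+1)` (`0 ≤ i ≤ m-1`), acting on the generators by the explicit
cabling formulas of Proposition 3.1 of Bardakov–Mikhailov–Wu. -/
def IsCabling (s : ∀ m : ℕ, ℕ → (VP m →* VP (m + 1))) : Prop :=
  ∀ m k l i : ℕ, 1 ≤ k → k < l → l ≤ m → i < m →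
    (s m i (lam' k l) =
      if i + 1 < k then lam' (k + 1) (l + 1)
      else if i + 1 = k then lam' k (l + 1) * lam' (k + 1) (l + 1)
      else if i + 1 < l then lam' k (l + 1)
      else if i + 1 = l then (conjA k l)⁻¹ * lam' k (l + 1) * conjA k l * lam' k l
      else lam' k l) ∧
    (s m i (lam' l k) =
      if i + 1 < k then lam' (l + 1) (k + 1)
      else if i + 1 = k then lam' (l + 1) (k + 1) * lam' (l + 1) k
      else if i + 1 < l then lam' (l + 1) k
      else if i + 1 = l then lam' l k * ((conjB k l)⁻¹ * lam' (l + 1) k * conjB k l)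
      else lam' l k)

/-- `d` is the family of face (strand-deleting) homomorphisms
`d_i : VP (m+1) → VP m` (`0 ≤ i ≤ m`), acting on the generators by the formulas
of Proposition 3.1 of Bardakov–Mikhailov–Wu. -/
def IsFace (d : ∀ m : ℕ, ℕ → (VP (m + 1) →* VP m)) : Prop :=
  ∀ m k l i : ℕ, 1 ≤ k → k < l → l ≤ m + 1 → i ≤ m →
    (d m i (lam' k l) =
      if i + 1 < k then lam' (k - 1) (l - 1)
      else if i + 1 = k then 1
      else if i + 1 < l then lam' k (l - 1)
      else if i + 1 = l then 1
      else lam' k l) ∧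
    (d m i (lam' l k) =
      if i + 1 < k then lam' (l - 1) (k - 1)
      else if i + 1 = k then 1
      else if i + 1 < l then lam' (l - 1) k
      else if i + 1 = l then 1
      else lam' l k)

/-- `ι` is the family of trivial-strand inclusions `VP m → VP (m+1)`, `λ_{ij} ↦ λ_{ij}`. -/
def IsIncl (ι : ∀ m : ℕ, VP m →* VP (m + 1)) : Prop :=
  ∀ m i j : ℕ, VPIdx m (i, j) → ι m (lam' i j) = lam' i j

/-- Iterated trivial-strand inclusion `VP p → VP (p + q)`. -/
def iotaIter (ι : ∀ m : ℕ, VP m →* VP (m + 1)) (p : ℕ) : (q : ℕ) → (VP p →* VP (p + q))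
  | 0 => MonoidHom.id (VP p)
  | q + 1 => (ι (p + q)).comp (iotaIter ι p q)

/-- The composite `s_{m} s_{m-1} ⋯ s_{skip+1} ŝ_{skip} s_{skip-1} ⋯ s_0 : VP 2 → VP (m+2)`
of `m` degeneracies with the index `skip` omitted. -/
def chain (s : ∀ m : ℕ, ℕ → (VP m →* VP (m + 1))) (skip : ℕ) :
    (m : ℕ) → (VP 2 →* VP (m + 2))
  | 0 => MonoidHom.id (VP 2)
  | m + 1 => (s (m + 2) (if skip ≤ m then m + 1 else m)).comp (chain s skip m)

/-- The cabled element `a_{k, n+2-k} = s_{n+1-1}⋯s_k ŝ_{k-1} s_{k-2}⋯s_0(λ_{1,2}) ∈ VP (n+2)`. -/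
def aa (s : ∀ m : ℕ, ℕ → (VP m →* VP (m + 1))) (n k : ℕ) : VP (n + 2) :=
  chain s (k - 1) n (lam' 1 2)

/-- The cabled element `b_{k, n+2-k} = s_{n+1-1}⋯s_k ŝ_{k-1} s_{k-2}⋯s_0(λ_{2,1}) ∈ VP (n+2)`. -/
def bb (s : ∀ m : ℕ, ℕ → (VP m →* VP (m + 1))) (n k : ℕ) : VP (n + 2) :=
  chain s (k - 1) n (lam' 2 1)

/-- The simplicial subgroups `T_m ≤ VP (m+1)`:
`T_0 = 1`, `T_1 = VP 2`, `T_{m+2} = ⟨s_0(T_{m+1}), …, s_{m+1}(T_{m+1})⟩`. -/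
def TT (s : ∀ m : ℕ, ℕ → (VP m →* VP (m + 1))) : (m : ℕ) → Subgroup (VP (m + 1))
  | 0 => ⊥
  | 1 => ⊤
  | m + 2 => ⨆ i ∈ Finset.range (m + 2), Subgroup.map (s (m + 2) i) (TT s (m + 1))
section CablingAux

variable {M : ℕ}

/-- The row `λ_{N,j} λ_{N,j-1} ⋯ λ_{N,1}`. -/
def Row (N j : ℕ) : VP M := ((List.range j).map fun i => lam' N (j - i)).prod

@[simp] lemma Row_zero (N : ℕ) : (Row N 0 : VP M) = 1 := rfl

lemma Row_succ (N j : ℕ) : (Row N (j + 1) : VP M) = lam' N (j + 1) * Row N j := by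
  unfold Row
  rw [List.range_succ_eq_map, List.map_cons, List.prod_cons, List.map_map]
  simp [Function.comp_def, Nat.succ_sub_succ]

lemma Row_succ' (N j k : ℕ) (h : j = k + 1) :
    (Row N j : VP M) = lam' N j * Row N k := by
  subst h; exact Row_succ N k

lemma conjB_eq (N r : ℕ) : (conjB (r + 1) N : VP M) = (Row N r)⁻¹ := by
  induction r with
  | zero => simp [conjB, Row]
  | succ r ih =>
    have h1 : (conjB (r + 2) N : VP M) = conjB (r + 1) N * (lam' N (r + 1))⁻¹ := by
      unfold conjB
      simp [List.range_succ]
    rw [h1, ih, Row_succ]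
    group

/-- The partial product `Row (j+1) j * Row (j+2) j * ⋯ * Row (j+c) j`. -/
def Pre (c j : ℕ) : VP M := ((List.range c).map fun t => Row (j + 1 + t) j).prod

@[simp] lemma Pre_zero (j : ℕ) : (Pre 0 j : VP M) = 1 := rfl

lemma Pre_succ (c j : ℕ) : (Pre (c + 1) j : VP M) = Pre c j * Row (j + 1 + c) j := by
  unfold Pre
  rw [List.range_succ]
  simp

/-- The word `Wd n j = Row (j+1) j * ⋯ * Row (n+2) j`, equal to `b_{j,n+2-j}`. -/
def Wd (n j : ℕ) : VP M := ((List.range (n + 2 - j)).map fun t => Row (j + 1 + t) j).prod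

lemma Wd_eq_Pre (n j : ℕ) : (Wd n j : VP M) = Pre (n + 2 - j) j := rfl

lemma Wd_split (n j : ℕ) (h : j ≤ n + 1) :
    (Wd n j : VP M) = Pre (n + 1 - j) j * Row (n + 2) j := by
  rw [Wd_eq_Pre, show n + 2 - j = (n + 1 - j) + 1 by omega, Pre_succ,
    show j + 1 + (n + 1 - j) = n + 2 by omega]

lemma Wd_succ (n j : ℕ) (h : j ≤ n + 2) :
    (Wd (n + 1) j : VP M) = Wd n j * Row (n + 3) j := by
  rw [Wd_eq_Pre (n + 1) j, show n + 1 + 2 - j = (n + 2 - j) + 1 by omega, Pre_succ,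
    show j + 1 + (n + 2 - j) = n + 3 by omega, Wd_eq_Pre n j]

lemma mk_vpidx (n i j : ℕ) (h1 : 1 ≤ i) (h2 : i ≤ n) (h3 : 1 ≤ j) (h4 : j ≤ n)
    (h5 : i ≠ j) : VPIdx n (i, j) := ⟨h1, h2, h3, h4, h5⟩

variable {s : ∀ m : ℕ, ℕ → (VP m →* VP (m + 1))}

lemma stop_fix (hs : IsCabling s) {n N i : ℕ} (h1 : 1 ≤ i) (h2 : i < N) (h3 : N ≤ n + 1) :
    s (n + 2) (n + 1) (lam' N i) = lam' N i := by
  have h := (hs (n + 2) i N (n + 1) h1 h2 (by omega) (by omega)).2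
  rw [if_neg (by omega), if_neg (by omega), if_neg (by omega), if_neg (by omega)] at h
  exact h

lemma stop_top (hs : IsCabling s) {n r : ℕ} (h2 : r + 1 ≤ n + 1) :
    s (n + 2) (n + 1) (lam' (n + 2) (r + 1))
      = lam' (n + 2) (r + 1) * (Row (n + 2) r * lam' (n + 3) (r + 1) * (Row (n + 2) r)⁻¹) := by
  have h := (hs (n + 2) (r + 1) (n + 2) (n + 1) (by omega) (by omega) le_rfl (by omega)).2
  rw [if_neg (by omega), if_neg (by omega), if_neg (by omega), if_pos rfl] at h
  rw [h, conjB_eq]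
  group

lemma smid_low (hs : IsCabling s) {n i : ℕ} (h1 : 1 ≤ i) (h2 : i ≤ n) :
    s (n + 2) n (lam' (n + 2) i) = lam' (n + 3) i := by
  have h := (hs (n + 2) i (n + 2) n h1 (by omega) le_rfl (by omega)).2
  rw [if_neg (by omega), if_neg (by omega), if_pos (by omega)] at h
  exact h

lemma smid_high (hs : IsCabling s) {n : ℕ} :
    s (n + 2) n (lam' (n + 2) (n + 1)) = lam' (n + 3) (n + 2) * lam' (n + 3) (n + 1) := by
  have h := (hs (n + 2) (n + 1) (n + 2) n (by omega) (by omega) le_rfl (by omega)).2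
  rw [if_neg (by omega), if_pos (by omega)] at h
  exact h

lemma stop_Row_fix (hs : IsCabling s) {n N : ℕ} (hN : N ≤ n + 1) :
    ∀ j, j < N → s (n + 2) (n + 1) (Row N j) = Row N j := by
  intro j
  induction j with
  | zero => intro _; simp
  | succ j ih =>
    intro hj
    rw [Row_succ, map_mul, stop_fix hs (by omega) hj hN, ih (by omega), Row_succ]

lemma stop_Row_top (hs : IsCabling s) {n : ℕ} :
    ∀ j, j ≤ n + 1 → s (n + 2) (n + 1) (Row (n + 2) j) = Row (n + 2) j * Row (n + 3) j := by
  intro j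
  induction j with
  | zero => intro _; simp
  | succ j ih =>
    intro hj
    rw [Row_succ, map_mul, ih (by omega), stop_top hs hj, Row_succ, Row_succ]
    group

lemma smid_Row (hs : IsCabling s) {n : ℕ} :
    ∀ r, r ≤ n → s (n + 2) n (Row (n + 2) r) = Row (n + 3) r := by
  intro r
  induction r with
  | zero => intro _; simp
  | succ r ih =>
    intro hr
    rw [Row_succ, map_mul, smid_low hs (by omega) hr, ih (by omega), Row_succ]

lemma smid_Row_top (hs : IsCabling s) {n : ℕ} :
    s (n + 2) n (Row (n + 2) (n + 1)) = Row (n + 3) (n + 2) := by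
  rw [Row_succ, map_mul, smid_high hs, smid_Row hs n le_rfl,
    Row_succ' (n + 3) (n + 2) (n + 1) rfl, Row_succ, mul_assoc]

lemma stop_Pre (hs : IsCabling s) {n j : ℕ} (hj : 1 ≤ j) :
    ∀ c, j + c ≤ n + 1 → s (n + 2) (n + 1) (Pre c j : VP (n + 2)) = Pre c j := by
  intro c
  induction c with
  | zero => intro _; simp
  | succ c ih =>
    intro hc
    rw [Pre_succ, map_mul, ih (by omega), stop_Row_fix hs (by omega) j (by omega), Pre_succ]

lemma stop_Wd (hs : IsCabling s) {n j : ℕ} (h1 : 1 ≤ j) (h2 : j ≤ n + 1) :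
    s (n + 2) (n + 1) (Wd n j) = Wd n j * Row (n + 3) j := by
  rw [Wd_split n j h2, map_mul, stop_Pre hs h1 _ (by omega), stop_Row_top hs j h2,
    ← mul_assoc, ← Wd_split n j h2]

variable {ι : ∀ m : ℕ, VP m →* VP (m + 1)}

lemma incl_Row (hι : IsIncl ι) {m N : ℕ} (hN : N ≤ m + 2) :
    ∀ j, j < N → ι (m + 2) (Row N j : VP (m + 2)) = Row N j := by
  intro j
  induction j with
  | zero => intro _; simp
  | succ j ih =>
    intro hj
    rw [Row_succ, map_mul, hι (m + 2) N (j + 1)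
      (mk_vpidx _ _ _ (by omega) hN (by omega) (by omega) (by omega)), ih (by omega), Row_succ]

lemma incl_Pre (hι : IsIncl ι) {m j : ℕ} (hj : 1 ≤ j) :
    ∀ c, j + c ≤ m + 1 → ι (m + 2) (Pre c j : VP (m + 2)) = Pre c j := by
  intro c
  induction c with
  | zero => intro _; simp
  | succ c ih =>
    intro hc
    rw [Pre_succ, map_mul, ih (by omega), incl_Row hι (by omega) j (by omega), Pre_succ]

lemma incl_Wd (hι : IsIncl ι) {m j : ℕ} (h1 : 1 ≤ j) (h2 : j ≤ m + 1) :
    ι (m + 2) (Wd m j : VP (m + 2)) = Wd m j := by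
  rw [Wd_split m j h2, map_mul, incl_Pre hι h1 _ (by omega),
    incl_Row hι (by omega) j (by omega), ← Wd_split m j h2]

lemma chain_congr (s : ∀ m : ℕ, ℕ → (VP m →* VP (m + 1))) :
    ∀ m s1 s2, m ≤ s1 → m ≤ s2 → chain s s1 m = chain s s2 m := by
  intro m
  induction m with
  | zero => intros; rfl
  | succ m ih =>
    intro s1 s2 h1 h2
    show (s (m + 2) (if s1 ≤ m then m + 1 else m)).comp (chain s s1 m)
      = (s (m + 2) (if s2 ≤ m then m + 1 else m)).comp (chain s s2 m)
    rw [if_neg (by omega), if_neg (by omega), ih s1 s2 (by omega) (by omega)]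

lemma bb_eq (hs : IsCabling s) : ∀ n j, 1 ≤ j → j ≤ n + 1 → bb s n j = Wd n j := by
  intro n
  induction n with
  | zero =>
    intro j h1 h2
    interval_cases j
    show (lam' 2 1 : VP 2) = Wd 0 1
    simp [Wd, Row, List.range_succ]
  | succ n ih =>
    intro j h1 h2
    rcases Nat.lt_or_ge j (n + 2) with hj | hj
    · have e : bb s (n + 1) j = s (n + 2) (n + 1) (bb s n j) := by
        show (s (n + 2) (if j - 1 ≤ n then n + 1 else n)).comp (chain s (j - 1) n) (lam' 2 1)
          = s (n + 2) (n + 1) (bb s n j)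
        rw [if_pos (by omega)]
        rfl
      rw [e, ih j h1 (by omega), stop_Wd hs h1 (by omega), ← Wd_succ n j (by omega)]
    · have hj2 : j = n + 2 := by omega
      subst hj2
      have e : bb s (n + 1) (n + 2) = s (n + 2) n (bb s n (n + 1)) := by
        show (s (n + 2) (if (n + 2) - 1 ≤ n then n + 1 else n)).comp
            (chain s ((n + 2) - 1) n) (lam' 2 1) = s (n + 2) n (bb s n (n + 1))
        rw [if_neg (by omega), chain_congr s n ((n + 2) - 1) ((n + 1) - 1) (by omega) (by omega)]
        rfl
      have w1 : (Wd n (n + 1) : VP (n + 2)) = Row (n + 2) (n + 1) := by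
        rw [Wd_split n (n + 1) le_rfl, show n + 1 - (n + 1) = 0 by omega, Pre_zero, one_mul]
      have w2 : (Wd (n + 1) (n + 2) : VP (n + 3)) = Row (n + 3) (n + 2) := by
        rw [Wd_split (n + 1) (n + 2) (by omega), show n + 1 + 1 - (n + 2) = 0 by omega,
          Pre_zero, one_mul]
      rw [e, ih (n + 1) (by omega) (by omega), w1]
      rw [smid_Row_top hs]
      exact w2.symm

end CablingAux

/-- (Formula (3.4).) In `VP n` with `n = m + 3 ≥ 3`, each generator
`λ_{n k}` is expressed in terms of the cabled elements `b_{i,j}`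
(`b_{i, n-i} = bb s (m+1) i`, and `b_{i, n-1-i} = bb s m i ∈ VP (n-1)` included via `ι`):
`λ_{n1} = b_{1,n-2}⁻¹ b_{1,n-1}`;
`λ_{nk} = b_{k,n-k-1}⁻¹ b_{k,n-k} b_{k-1,n-k+1}⁻¹ b_{k-1,n-k}` for `1 < k < n-1`;
`λ_{n,n-1} = b_{n-1,1} b_{n-2,2}⁻¹ b_{n-2,1}`. -/
theorem lam_in_terms_of_bb (s : ∀ m : ℕ, ℕ → (VP m →* VP (m + 1)))
    (ι : ∀ m : ℕ, VP m →* VP (m + 1)) (hs : IsCabling s) (hι : IsIncl ι) (m : ℕ) :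
    ((lam' (m + 3) 1 : VP (m + 3)) = (ι (m + 2) (bb s m 1))⁻¹ * bb s (m + 1) 1) ∧
    (∀ k : ℕ, 1 < k → k < m + 2 →
      (lam' (m + 3) k : VP (m + 3)) =
        (ι (m + 2) (bb s m k))⁻¹ * bb s (m + 1) k *
          (bb s (m + 1) (k - 1))⁻¹ * ι (m + 2) (bb s m (k - 1))) ∧
    ((lam' (m + 3) (m + 2) : VP (m + 3)) =
      bb s (m + 1) (m + 2) * (bb s (m + 1) (m + 1))⁻¹ * ι (m + 2) (bb s m (m + 1))) := by
  refine ⟨?_, ?_, ?_⟩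
  · rw [bb_eq hs m 1 le_rfl (by omega), bb_eq hs (m + 1) 1 le_rfl (by omega),
      incl_Wd hι le_rfl (by omega), Wd_succ m 1 (by omega),
      Row_succ' (m + 3) 1 0 rfl, Row_zero, mul_one, inv_mul_cancel_left]
  · intro k hk1 hk2
    rw [bb_eq hs m k (by omega) (by omega), bb_eq hs (m + 1) k (by omega) (by omega),
      bb_eq hs (m + 1) (k - 1) (by omega) (by omega), bb_eq hs m (k - 1) (by omega) (by omega),
      incl_Wd hι (by omega) (by omega), incl_Wd hι (by omega) (by omega),
      Wd_succ m k (by omega), Wd_succ m (k - 1) (by omega),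
      Row_succ' (m + 3) k (k - 1) (by omega)]
    group
  · rw [bb_eq hs (m + 1) (m + 2) (by omega) (by omega),
      bb_eq hs (m + 1) (m + 1) (by omega) (by omega),
      bb_eq hs m (m + 1) (by omega) (by omega), incl_Wd hι (by omega) (by omega)]
    have w2 : (Wd (m + 1) (m + 2) : VP (m + 3)) = Row (m + 3) (m + 2) := by
      rw [Wd_split (m + 1) (m + 2) (by omega), show m + 1 + 1 - (m + 2) = 0 by omega,
        Pre_zero, one_mul]
    rw [w2, Wd_succ m (m + 1) (by omega), Row_succ' (m + 3) (m + 2) (m + 1) rfl]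
    group
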